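/- arXiv:0710.4790 — 2 statements merged into one kernel-verified Lean document; each statement's English description precedes it below -/
import Mathlib

section
/- Let n ≥ 1, let μ be a finite Borel measure on ℝⁿ with compact support, and let f : ℝⁿ → ℂ be in L¹(μ). Define g(x) := ∫_{ℝⁿ} f(s) e^{−i⟨s,x⟩} dμ(s) for x ∈ ℝⁿ. If the set {x ∈ ℝⁿ : g(x) = 0} has positive Lebesgue measure, then g(x) = 0 for every x ∈ ℝⁿ. -/
open MeasureTheory Complex
open Set Metric

-- polar slice lemma
lemma exists_slice {E : Type*} [NormedAddCommGroup E] [NormedSpace ℝ E]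
    [MeasurableSpace E] [BorelSpace E] [FiniteDimensional ℝ E] [Nontrivial E]
    (μ : Measure E) [μ.IsAddHaarMeasure] (B : Set E) (hBm : MeasurableSet B)
    (hB0 : 0 < μ B) (y : E) : ∃ v : E, ‖v‖ = 1 ∧ 0 < volume {t : ℝ | y + t • v ∈ B} := by
  set B' := (fun x => y + x) ⁻¹' B with hB'def
  have hB'm : MeasurableSet B' := hBm.preimage (measurable_const_add y)
  have hB'0 : 0 < μ (B' \ {0}) := by
    rw [measure_diff_null (measure_singleton 0)]
    rwa [hB'def, measure_preimage_add]
  set C : Set ({0}ᶜ : Set E) := Subtype.val ⁻¹' B' with hCdef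
  have hCm : MeasurableSet C := hB'm.preimage measurable_subtype_coe
  have hC : μ.comap Subtype.val C = μ (B' \ {0}) := by
    rw [comap_subtype_coe_apply (measurableSet_singleton (0:E)).compl]
    congr 1
    rw [Subtype.image_preimage_coe]
    rw [Set.diff_eq, Set.inter_comm]
  set φ := homeomorphUnitSphereProd E with hφ
  have MP := MeasureTheory.Measure.measurePreserving_homeomorphUnitSphereProd μ
  set D := φ.symm ⁻¹' C with hDdef
  have hDm : MeasurableSet D := hCm.preimage φ.symm.continuous.measurable
  have hD : (μ.toSphere.prod (Measure.volumeIoiPow (Module.finrank ℝ E - 1))) D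
      = μ (B' \ {0}) := by
    rw [← MP.measure_preimage hDm.nullMeasurableSet]
    rw [← hC]
    congr 1
    ext x
    simp [hDdef, hφ]
  have hD0 : 0 < (μ.toSphere.prod (Measure.volumeIoiPow (Module.finrank ℝ E - 1))) D := by
    rw [hD]; exact hB'0
  rw [Measure.prod_apply hDm] at hD0
  have hex : ∃ v : sphere (0:E) 1,
      0 < Measure.volumeIoiPow (Module.finrank ℝ E - 1) (Prod.mk v ⁻¹' D) := by
    by_contra h
    push_neg at h
    have : ∀ v : sphere (0:E) 1,
        Measure.volumeIoiPow (Module.finrank ℝ E - 1) (Prod.mk v ⁻¹' D) = 0 :=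
      fun v => le_antisymm (h v) (zero_le)
    rw [lintegral_congr this] at hD0
    simp at hD0
  obtain ⟨v, hv⟩ := hex
  have hsm : MeasurableSet (Prod.mk v ⁻¹' D) := hDm.preimage measurable_prodMk_left
  have hslice : 0 < (volume.comap (Subtype.val : Ioi (0:ℝ) → ℝ)) (Prod.mk v ⁻¹' D) := by
    by_contra h'
    have h0 : (volume.comap (Subtype.val : Ioi (0:ℝ) → ℝ)) (Prod.mk v ⁻¹' D) = 0 :=
      le_antisymm (not_lt.1 h') (zero_le)
    rw [Measure.volumeIoiPow, withDensity_apply _ hsm, Measure.restrict_eq_zero.2 h0,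
      lintegral_zero_measure] at hv
    exact lt_irrefl _ hv
  rw [comap_subtype_coe_apply measurableSet_Ioi] at hslice
  refine ⟨v.1, mem_sphere_zero_iff_norm.1 v.2, lt_of_lt_of_le hslice (measure_mono ?_)⟩
  rintro t ⟨r, hr, rfl⟩
  have : (Subtype.val (φ.symm (v, r)) : E) ∈ B' := hr
  rw [homeomorphUnitSphereProd_symm_apply_coe] at this
  exact this

lemma entire_aux {α : Type*} [MeasurableSpace α] (μ : Measure α) [IsFiniteMeasure μ]
    (f : α → ℂ) (hf : Integrable f μ) (A B : α → ℝ)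
    (hA : AEMeasurable A μ) (hB : AEMeasurable B μ) (C : ℝ) (hC0 : 0 ≤ C)
    (hC : ∀ᵐ s ∂μ, |B s| ≤ C) :
    Differentiable ℂ (fun z : ℂ => ∫ s, f s * Complex.exp (-Complex.I * ((A s : ℂ) + z * (B s : ℂ))) ∂μ) := by
  intro z₀
  have haem : ∀ z : ℂ, AEMeasurable (fun s => -Complex.I * ((A s : ℂ) + z * (B s : ℂ))) μ := by
    intro z
    exact (((Complex.measurable_ofReal.comp_aemeasurable hA).add
      ((Complex.measurable_ofReal.comp_aemeasurable hB).const_mul z)).const_mul (-Complex.I))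
  have hmeas : ∀ z : ℂ, AEStronglyMeasurable
      (fun s => f s * Complex.exp (-Complex.I * ((A s : ℂ) + z * (B s : ℂ)))) μ :=
    fun z => hf.aestronglyMeasurable.mul
      (Complex.measurable_exp.comp_aemeasurable (haem z)).aestronglyMeasurable
  have hnorm : ∀ (z : ℂ) (s : α), ‖Complex.exp (-Complex.I * ((A s : ℂ) + z * (B s : ℂ)))‖
      = Real.exp (B s * z.im) := by
    intro z s
    rw [Complex.norm_exp]
    congr 1
    simp [Complex.mul_re, Complex.add_re, Complex.add_im, Complex.mul_im]
    ring
  have himle : ∀ z ∈ ball z₀ 1, |z.im| ≤ |z₀.im| + 1 := by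
    intro z hz
    have h1 : |z.im - z₀.im| ≤ ‖z - z₀‖ := by
      simpa using Complex.abs_im_le_norm (z - z₀)
    have h2 : ‖z - z₀‖ < 1 := by
      rwa [mem_ball, Complex.dist_eq] at hz
    have := abs_sub_abs_le_abs_sub z.im z₀.im
    linarith [abs_sub_comm z.im z₀.im ▸ h1]
  have hexp : ∀ s, |B s| ≤ C → ∀ z ∈ ball z₀ 1,
      Real.exp (B s * z.im) ≤ Real.exp (C * (|z₀.im| + 1)) := by
    intro s hs z hz
    apply Real.exp_le_exp.2
    calc B s * z.im ≤ |B s * z.im| := le_abs_self _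
    _ = |B s| * |z.im| := abs_mul _ _
    _ ≤ C * (|z₀.im| + 1) :=
      mul_le_mul hs (himle z hz) (abs_nonneg _) hC0
  have key : ∀ᵐ s ∂μ, ∀ z ∈ ball z₀ 1,
      ‖f s * (Complex.exp (-Complex.I * ((A s : ℂ) + z * (B s : ℂ))) * (-Complex.I * (B s : ℂ)))‖
        ≤ ‖f s‖ * (C * Real.exp (C * (|z₀.im| + 1))) := by
    filter_upwards [hC] with s hs z hz
    rw [norm_mul, norm_mul, hnorm, norm_mul, norm_neg, Complex.norm_I, one_mul,
      Complex.norm_real, Real.norm_eq_abs]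
    rw [mul_comm (Real.exp _) _]
    apply mul_le_mul_of_nonneg_left ?_ (norm_nonneg _)
    exact mul_le_mul hs (hexp s hs z hz) (Real.exp_nonneg _) hC0
  have hderiv : ∀ᵐ s ∂μ, ∀ z ∈ ball z₀ 1,
      HasDerivAt (fun z : ℂ => f s * Complex.exp (-Complex.I * ((A s : ℂ) + z * (B s : ℂ))))
        (f s * (Complex.exp (-Complex.I * ((A s : ℂ) + z * (B s : ℂ))) * (-Complex.I * (B s : ℂ)))) z := by
    filter_upwards with s z _
    have h1 : HasDerivAt (fun z : ℂ => -Complex.I * ((A s : ℂ) + z * (B s : ℂ)))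
        (-Complex.I * (B s : ℂ)) z := by
      simpa using (((hasDerivAt_id z).mul_const ((B s : ℂ))).const_add ((A s : ℂ))).const_mul (-Complex.I)
    exact (h1.cexp.const_mul (f s))
  have hFint : Integrable (fun s => f s * Complex.exp (-Complex.I * ((A s : ℂ) + z₀ * (B s : ℂ)))) μ := by
    apply Integrable.mono' (hf.norm.mul_const (Real.exp (C * (|z₀.im| + 1)))) (hmeas z₀)
    filter_upwards [hC] with s hs
    rw [norm_mul, hnorm]
    exact mul_le_mul_of_nonneg_left (hexp s hs z₀ (mem_ball_self one_pos)) (norm_nonneg _)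
  have hF'meas : AEStronglyMeasurable
      (fun s => f s * (Complex.exp (-Complex.I * ((A s : ℂ) + z₀ * (B s : ℂ))) * (-Complex.I * (B s : ℂ)))) μ :=
    hf.aestronglyMeasurable.mul ((Complex.measurable_exp.comp_aemeasurable (haem z₀)).mul
      ((Complex.measurable_ofReal.comp_aemeasurable hB).const_mul (-Complex.I))).aestronglyMeasurable
  exact ((hasDerivAt_integral_of_dominated_loc_of_deriv_le (ball_mem_nhds z₀ one_pos)
    (Filter.Eventually.of_forall hmeas) hFint hF'meas key
    ((hf.norm.mul_const _)) hderiv).2).differentiableAt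

/-- If `μ` is a finite compactly supported Borel measure on `ℝⁿ`, `f ∈ L¹(μ)`, and the
Fourier transform `g(x) = ∫ f(s) e^{-i⟨s,x⟩} dμ(s)` vanishes on a set of positive
Lebesgue measure, then `g` vanishes identically. -/
theorem stmt2 (n : ℕ) (hn : 1 ≤ n)
    (μ : Measure (EuclideanSpace ℝ (Fin n))) [IsFiniteMeasure μ]
    (K : Set (EuclideanSpace ℝ (Fin n))) (hK : IsCompact K) (hμK : μ Kᶜ = 0)
    (f : EuclideanSpace ℝ (Fin n) → ℂ) (hf : Integrable f μ)
    (g : EuclideanSpace ℝ (Fin n) → ℂ)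
    (hg : ∀ x, g x = ∫ s, f s * Complex.exp (-Complex.I * ((inner ℝ s x : ℝ) : ℂ)) ∂μ)
    (h0 : 0 < volume {x | g x = 0}) :
    ∀ x, g x = 0 := by
  haveI : Nonempty (Fin n) := ⟨⟨0, hn⟩⟩
  haveI : Nontrivial (EuclideanSpace ℝ (Fin n)) := inferInstance
  -- continuity of g
  have hgc : Continuous g := by
    have hcont : Continuous
        (fun x => ∫ s, f s * Complex.exp (-Complex.I * ((inner ℝ s x : ℝ) : ℂ)) ∂μ) := by
      apply continuous_of_dominated (bound := fun s => ‖f s‖)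
      · intro x
        exact hf.aestronglyMeasurable.mul
          ((Complex.measurable_exp.comp_aemeasurable
            ((Complex.measurable_ofReal.comp_aemeasurable
              ((continuous_id.inner continuous_const).measurable.aemeasurable)).const_mul
              (-Complex.I))).aestronglyMeasurable)
      · intro x
        filter_upwards with s
        have h1 : ‖Complex.exp (-Complex.I * ((inner ℝ s x : ℝ) : ℂ))‖ = 1 := by
          rw [Complex.norm_exp]
          simp [Complex.mul_re]
        rw [norm_mul, h1, mul_one]
      · exact hf.norm
      · filter_upwards with s
        apply continuous_const.mul
        apply Complex.continuous_exp.comp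
        exact continuous_const.mul
          (Complex.continuous_ofReal.comp (continuous_const.inner continuous_id))
    have : g = fun x => ∫ s, f s * Complex.exp (-Complex.I * ((inner ℝ s x : ℝ) : ℂ)) ∂μ :=
      funext hg
    rwa [this]
  have hZm : MeasurableSet {x | g x = 0} :=
    (isClosed_eq hgc continuous_const).measurableSet
  intro y
  obtain ⟨v, hv1, hv⟩ := exists_slice volume {x | g x = 0} hZm h0 y
  -- bound on K
  obtain ⟨R, hR⟩ := hK.isBounded.subset_closedBall 0
  set C := max R 0 with hCdef
  have hC0 : (0:ℝ) ≤ C := le_max_right _ _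
  have haeK : ∀ᵐ s ∂μ, s ∈ K := by
    rw [ae_iff]
    exact hμK
  have hCbound : ∀ᵐ s ∂μ, |(inner ℝ s v : ℝ)| ≤ C := by
    filter_upwards [haeK] with s hs
    calc |(inner ℝ s v : ℝ)| ≤ ‖s‖ * ‖v‖ := abs_real_inner_le_norm s v
    _ = ‖s‖ := by rw [hv1, mul_one]
    _ ≤ R := mem_closedBall_zero_iff.1 (hR hs)
    _ ≤ C := le_max_left _ _
  set A : EuclideanSpace ℝ (Fin n) → ℝ := fun s => inner ℝ s y with hAdef
  set B : EuclideanSpace ℝ (Fin n) → ℝ := fun s => inner ℝ s v with hBdef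
  set G : ℂ → ℂ :=
    fun z => ∫ s, f s * Complex.exp (-Complex.I * ((A s : ℂ) + z * (B s : ℂ))) ∂μ with hGdef
  have hG : Differentiable ℂ G :=
    entire_aux μ f hf A B
      ((continuous_id.inner continuous_const).measurable.aemeasurable)
      ((continuous_id.inner continuous_const).measurable.aemeasurable) C hC0 hCbound
  have hGt : ∀ t : ℝ, G (t : ℂ) = g (y + t • v) := by
    intro t
    rw [hg, hGdef]
    refine integral_congr_ae (.of_forall fun s => ?_)
    have h : (inner ℝ s (y + t • v) : ℝ) = A s + t * B s := by
      rw [inner_add_right, real_inner_smul_right]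
    simp only [h]
    push_cast
    ring_nf
  have hGS : ∀ t : ℝ, g (y + t • v) = 0 → G (t : ℂ) = 0 := fun t ht => (hGt t).trans ht
  -- positive measure bounded piece
  set S := {t : ℝ | g (y + t • v) = 0} with hSdef
  have hS : 0 < volume S := hv
  have hexN : ∃ N : ℕ, 0 < volume (S ∩ Icc (-(N:ℝ)) N) := by
    by_contra h
    push_neg at h
    have h' : ∀ N : ℕ, volume (S ∩ Icc (-(N:ℝ)) N) = 0 :=
      fun N => le_antisymm (h N) (zero_le)
    have hsub : S ⊆ ⋃ N : ℕ, S ∩ Icc (-(N:ℝ)) N := by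
      intro t ht
      refine Set.mem_iUnion.2 ⟨⌈|t|⌉₊, ht, ?_⟩
      have h1 : |t| ≤ (⌈|t|⌉₊ : ℝ) := Nat.le_ceil _
      constructor <;> [linarith [neg_abs_le t]; linarith [le_abs_self t]]
    have hle : volume S ≤ volume (⋃ N : ℕ, S ∩ Icc (-(N:ℝ)) N) := measure_mono hsub
    have hle2 := hle.trans (measure_iUnion_le _)
    simp only [h', tsum_zero, le_zero_iff] at hle2
    rw [hle2] at hS
    exact lt_irrefl _ hS
  obtain ⟨N, hN⟩ := hexN
  have hinf : (S ∩ Icc (-(N:ℝ)) N).Infinite := by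
    intro hfin
    rw [hfin.measure_zero] at hN
    exact lt_irrefl _ hN
  obtain ⟨t₀, _, hacc⟩ := hinf.exists_accPt_of_subset_isCompact isCompact_Icc
    inter_subset_right
  rw [accPt_iff_frequently] at hacc
  have hfreq : ∃ᶠ t in nhdsWithin t₀ {t₀}ᶜ, g (y + t • v) = 0 := by
    rw [frequently_nhdsWithin_iff]
    exact hacc.mono fun t ht => ⟨ht.2.1, ht.1⟩
  have htend : Filter.Tendsto (fun t : ℝ => (t : ℂ)) (nhdsWithin t₀ {t₀}ᶜ)
      (nhdsWithin (t₀ : ℂ) {(t₀ : ℂ)}ᶜ) := by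
    rw [tendsto_nhdsWithin_iff]
    constructor
    · exact (Complex.continuous_ofReal.tendsto t₀).mono_left nhdsWithin_le_nhds
    · filter_upwards [self_mem_nhdsWithin] with t ht
      simp only [Set.mem_compl_iff, Set.mem_singleton_iff] at ht ⊢
      exact_mod_cast ht
  have hfreqC : ∃ᶠ z in nhdsWithin (t₀ : ℂ) {(t₀ : ℂ)}ᶜ, G z = 0 :=
    htend.frequently (hfreq.mono fun t ht => hGS t ht)
  have hGan : AnalyticOnNhd ℂ G Set.univ := fun z _ => hG.analyticAt z
  have hzero : Set.EqOn G 0 Set.univ :=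
    hGan.eqOn_zero_of_preconnected_of_frequently_eq_zero
      isPreconnected_univ (Set.mem_univ (t₀ : ℂ)) hfreqC
  have := hzero (Set.mem_univ (0 : ℂ))
  have h00 : G ((0:ℝ) : ℂ) = g y := by
    rw [hGt]; simp
  rw [Complex.ofReal_zero] at h00
  rw [this] at h00
  exact h00.symm
end

section
/- Let n ≥ 1 and let V ∈ L¹(ℝⁿ, ℝ) with ∫_{ℝⁿ} V(x) dx < 0. Let μ be a nonzero finite Borel measure on ℝⁿ. Then there exist a point s₀ ∈ ℝⁿ and δ > 0 such that μ(B(s₀, δ)) > 0 and the real part of ∬_{B(s₀,δ) × B(s₀,δ)} V̂(s − s′) dμ(s) dμ(s′) is strictly negative. In particular, there exists f ∈ L²(μ) with Re(∬ V̂(s−s′) conj(f(s)) f(s′) dμ(s) dμ(s′)) < 0. -/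
open MeasureTheory Complex

/-- The Fourier transform of an integrable potential `V` on `ℝⁿ`,
`V̂(ξ) = (2π)^{-n/2} ∫ V(x) e^{-i⟨ξ,x⟩} dx`. -/
noncomputable def fourierSymbol (n : ℕ) (V : EuclideanSpace ℝ (Fin n) → ℝ)
    (ξ : EuclideanSpace ℝ (Fin n)) : ℂ :=
  (((2 * Real.pi) ^ (-(n : ℝ) / 2) : ℝ) : ℂ) *
    ∫ x, (V x : ℂ) * Complex.exp (-Complex.I * ((inner ℝ ξ x : ℝ) : ℂ))

lemma norm_kernel_aux (r : ℝ) : ‖Complex.exp (-Complex.I * (r : ℂ))‖ = 1 := by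
  simp [Complex.norm_exp]

lemma fourierSymbol_continuous (n : ℕ) (V : EuclideanSpace ℝ (Fin n) → ℝ)
    (hV : Integrable V) : Continuous (fourierSymbol n V) := by
  unfold fourierSymbol
  refine continuous_const.mul ?_
  refine continuous_of_dominated (bound := fun x => |V x|) ?_ ?_ ?_ ?_
  · intro ξ
    exact (Complex.continuous_ofReal.comp_aestronglyMeasurable hV.1).mul
      ((Complex.continuous_exp.comp (continuous_const.mul
        (Complex.continuous_ofReal.comp
          (continuous_const.inner continuous_id)))).aestronglyMeasurable)
  · intro ξ
    filter_upwards with x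
    rw [norm_mul, norm_kernel_aux, mul_one, Complex.norm_real, Real.norm_eq_abs]
  · exact hV.abs
  · filter_upwards with x
    exact continuous_const.mul (Complex.continuous_exp.comp (continuous_const.mul
      (Complex.continuous_ofReal.comp (continuous_id.inner continuous_const))))

lemma fourierSymbol_zero_re (n : ℕ) (V : EuclideanSpace ℝ (Fin n) → ℝ) :
    (fourierSymbol n V 0).re = ((2 * Real.pi) ^ (-(n : ℝ) / 2) : ℝ) * ∫ x, V x := by
  unfold fourierSymbol
  have : ∀ x : EuclideanSpace ℝ (Fin n),
      (V x : ℂ) * Complex.exp (-Complex.I * (((inner ℝ (0 : EuclideanSpace ℝ (Fin n)) x : ℝ)) : ℂ))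
        = (V x : ℂ) := by
    intro x
    simp [inner_zero_left]
  rw [show (fun x => (V x : ℂ) * Complex.exp
      (-Complex.I * (((inner ℝ (0 : EuclideanSpace ℝ (Fin n)) x : ℝ)) : ℂ))) = fun x => (V x : ℂ)
      from funext this]
  rw [show ∫ x : EuclideanSpace ℝ (Fin n), ((V x : ℝ) : ℂ) = (((∫ x, V x : ℝ)) : ℂ)
    from integral_ofReal]
  simp [← Complex.ofReal_mul]

lemma fourierSymbol_norm_le (n : ℕ) (V : EuclideanSpace ℝ (Fin n) → ℝ)
    (ξ : EuclideanSpace ℝ (Fin n)) :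
    ‖fourierSymbol n V ξ‖ ≤ ((2 * Real.pi) ^ (-(n : ℝ) / 2) : ℝ) * ∫ x, |V x| := by
  unfold fourierSymbol
  rw [norm_mul]
  have h1 : ‖((((2 * Real.pi) ^ (-(n : ℝ) / 2) : ℝ)) : ℂ)‖
      = ((2 * Real.pi) ^ (-(n : ℝ) / 2) : ℝ) := by
    rw [Complex.norm_real, Real.norm_eq_abs, abs_of_pos]
    positivity
  rw [h1]
  gcongr
  calc ‖∫ x, (V x : ℂ) * Complex.exp (-Complex.I * ((inner ℝ ξ x : ℝ) : ℂ))‖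
      ≤ ∫ x, ‖(V x : ℂ) * Complex.exp (-Complex.I * ((inner ℝ ξ x : ℝ) : ℂ))‖ :=
        norm_integral_le_integral_norm _
    _ = ∫ x, |V x| := by
        congr 1
        funext x
        rw [norm_mul, norm_kernel_aux, mul_one, Complex.norm_real, Real.norm_eq_abs]

/-- If `∫ V < 0` and `μ ≠ 0` is a finite Borel measure, then there is a small ball of
positive `μ`-measure on which the quadratic form with kernel `V̂(s - s')` is negative;
in particular some `f ∈ L²(μ)` makes the form strictly negative. -/
theorem stmt10 (n : ℕ) (hn : 1 ≤ n)
    (V : EuclideanSpace ℝ (Fin n) → ℝ) (hV : Integrable V)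
    (hVint : (∫ x, V x) < 0)
    (μ : Measure (EuclideanSpace ℝ (Fin n))) [IsFiniteMeasure μ] (hμ : μ ≠ 0) :
    (∃ s₀ : EuclideanSpace ℝ (Fin n), ∃ δ : ℝ, 0 < δ ∧ 0 < μ (Metric.ball s₀ δ) ∧
      (∫ s in Metric.ball s₀ δ, ∫ s' in Metric.ball s₀ δ,
          fourierSymbol n V (s - s') ∂μ ∂μ).re < 0) ∧
    ∃ f : EuclideanSpace ℝ (Fin n) → ℂ, MemLp f 2 μ ∧
      (∫ s, ∫ s',
          fourierSymbol n V (s - s') * (starRingEnd ℂ) (f s) * f s' ∂μ ∂μ).re < 0 := by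
  set F := fourierSymbol n V with hF
  have hFcont : Continuous F := fourierSymbol_continuous n V hV
  set c : ℝ := ((2 * Real.pi) ^ (-(n : ℝ) / 2) : ℝ) with hc
  have hcpos : 0 < c := by positivity
  have hF0 : (F 0).re < 0 := by
    rw [hF, fourierSymbol_zero_re]
    exact mul_neg_of_pos_of_neg hcpos hVint
  set C : ℝ := c * ∫ x, |V x| with hC
  have hFbd : ∀ ξ, ‖F ξ‖ ≤ C := fourierSymbol_norm_le n V
  set r : ℝ := (F 0).re / 2 with hrdef
  have hrneg : r < 0 := by simp only [hrdef]; linarith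
  have hF0r : (F 0).re < r := by simp only [hrdef]; linarith
  -- find ε such that the real part stays below r on the ε-ball
  have hUopen : IsOpen ((fun ξ => (F ξ).re) ⁻¹' Set.Iio r) :=
    (Complex.continuous_re.comp hFcont).isOpen_preimage _ isOpen_Iio
  have h0U : (0 : EuclideanSpace ℝ (Fin n)) ∈ (fun ξ => (F ξ).re) ⁻¹' Set.Iio r := hF0r
  obtain ⟨ε, hεpos, hεsub⟩ := Metric.isOpen_iff.1 hUopen 0 h0U
  have hsmall : ∀ ξ : EuclideanSpace ℝ (Fin n), ‖ξ‖ < ε → (F ξ).re < r := by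
    intro ξ hξ
    exact hεsub (mem_ball_zero_iff.2 hξ)
  set δ : ℝ := ε / 2 with hδdef
  have hδpos : 0 < δ := by positivity
  -- find a point whose δ-ball has positive measure
  have hμuniv : μ Set.univ ≠ 0 := by
    simpa [Measure.measure_univ_eq_zero] using hμ
  obtain ⟨s₀, -, hs₀⟩ := exists_mem_forall_mem_nhdsWithin_pos_measure hμuniv
  set B := Metric.ball s₀ δ with hBdef
  have hBmeas : MeasurableSet B := Metric.isOpen_ball.measurableSet
  have hBpos : 0 < μ B := by
    apply hs₀
    rw [nhdsWithin_univ]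
    exact Metric.ball_mem_nhds _ hδpos
  set m : ℝ := (μ B).toReal with hm
  have hmpos : 0 < m := ENNReal.toReal_pos hBpos.ne' (measure_ne_top μ B)
  -- pointwise negativity on B × B
  have hkey : ∀ s ∈ B, ∀ s' ∈ B, (F (s - s')).re < r := by
    intro s hs s' hs'
    apply hsmall
    have : dist s s' < ε := by
      calc dist s s' ≤ dist s s₀ + dist s₀ s' := dist_triangle _ _ _
        _ < δ + δ := by
            rw [Metric.mem_ball] at hs hs'
            rw [dist_comm s₀ s'] at *
            linarith
        _ = ε := by rw [hδdef]; ring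
    simpa [dist_eq_norm] using this
  -- integrability of the kernel in the inner variable
  have hint : ∀ s : EuclideanSpace ℝ (Fin n),
      Integrable (fun s' => F (s - s')) (μ.restrict B) := by
    intro s
    exact (integrable_const C).mono'
      ((hFcont.comp (continuous_const.sub continuous_id)).aestronglyMeasurable)
      (Filter.Eventually.of_forall fun s' => hFbd _)
  set G : EuclideanSpace ℝ (Fin n) → ℂ := fun s => ∫ s' in B, F (s - s') ∂μ with hG
  have hGcont : Continuous G := by
    refine continuous_of_dominated (bound := fun _ => C) ?_ ?_ ?_ ?_
    · intro s
      exact (hFcont.comp (continuous_const.sub continuous_id)).aestronglyMeasurable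
    · intro s
      exact Filter.Eventually.of_forall fun s' => hFbd _
    · exact integrable_const C
    · exact Filter.Eventually.of_forall fun s' =>
        hFcont.comp (continuous_id.sub continuous_const)
  have hGbd : ∀ s, ‖G s‖ ≤ C * m := by
    intro s
    have := norm_integral_le_of_norm_le_const (μ := μ.restrict B)
      (f := fun s' => F (s - s')) (C := C) (Filter.Eventually.of_forall fun s' => hFbd _)
    simpa [hm, Measure.restrict_apply_univ, measureReal_def] using this
  have hGint : Integrable G (μ.restrict B) :=
    (integrable_const (C * m)).mono' hGcont.aestronglyMeasurable
      (Filter.Eventually.of_forall hGbd)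
  -- the real part computation
  have hGre : ∀ s ∈ B, (G s).re ≤ r * m := by
    intro s hs
    have h1 : (G s).re = ∫ s' in B, (F (s - s')).re ∂μ := (integral_re (hint s)).symm
    rw [h1]
    have h2 : ∫ s' in B, (F (s - s')).re ∂μ ≤ ∫ (_ : EuclideanSpace ℝ (Fin n)) in B, r ∂μ :=
      setIntegral_mono_on (hint s).re (integrable_const r) hBmeas
        (fun s' hs' => (hkey s hs s' hs').le)
    calc ∫ s' in B, (F (s - s')).re ∂μ ≤ ∫ (_ : EuclideanSpace ℝ (Fin n)) in B, r ∂μ := h2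
      _ = m * r := by simp [hm, smul_eq_mul, measureReal_def]
      _ = r * m := mul_comm _ _
  have hmain : (∫ s in B, G s ∂μ).re < 0 := by
    have h0 : (∫ s in B, G s ∂μ).re = ∫ s in B, (G s).re ∂μ := (integral_re hGint).symm
    rw [h0]
    have h3 : ∫ s in B, (G s).re ∂μ ≤ ∫ (_ : EuclideanSpace ℝ (Fin n)) in B, r * m ∂μ :=
      setIntegral_mono_on hGint.re (integrable_const _) hBmeas hGre
    have h4 : ∫ (_ : EuclideanSpace ℝ (Fin n)) in B, r * m ∂μ = m * (r * m) := by
      simp [hm, smul_eq_mul, measureReal_def]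
    have h5 : m * (r * m) < 0 := by
      apply mul_neg_of_pos_of_neg hmpos
      exact mul_neg_of_neg_of_pos hrneg hmpos
    linarith [h3, h4 ▸ h3]
  constructor
  · exact ⟨s₀, δ, hδpos, hBpos, hmain⟩
  -- second part: take f = indicator of B
  · refine ⟨B.indicator (fun _ => (1 : ℂ)), (memLp_const 1).indicator hBmeas, ?_⟩
    set f : EuclideanSpace ℝ (Fin n) → ℂ := B.indicator (fun _ => (1 : ℂ)) with hf
    have hinner : ∀ s : EuclideanSpace ℝ (Fin n),
        (∫ s', F (s - s') * (starRingEnd ℂ) (f s) * f s' ∂μ) = (starRingEnd ℂ) (f s) * G s := by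
      intro s
      have : (fun s' => F (s - s') * (starRingEnd ℂ) (f s) * f s')
          = fun s' => (starRingEnd ℂ) (f s) * B.indicator (fun s' => F (s - s')) s' := by
        funext s'
        by_cases hs' : s' ∈ B
        · simp [hf, Set.indicator_of_mem hs']
          ring
        · simp [hf, Set.indicator_of_notMem hs']
      rw [this, integral_const_mul _ _, integral_indicator hBmeas]
    have houter : (fun s => (starRingEnd ℂ) (f s) * G s) = B.indicator G := by
      funext s
      by_cases hs : s ∈ B
      · simp [hf, Set.indicator_of_mem hs]
      · simp [hf, Set.indicator_of_notMem hs]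
    calc (∫ s, ∫ s', F (s - s') * (starRingEnd ℂ) (f s) * f s' ∂μ ∂μ).re
        = (∫ s, (starRingEnd ℂ) (f s) * G s ∂μ).re := by
          congr 2
          funext s
          exact hinner s
      _ = (∫ s in B, G s ∂μ).re := by rw [houter, integral_indicator hBmeas]
      _ < 0 := hmain
end
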